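/- arXiv:1104.3372 — 6 statements merged into one kernel-verified Lean document; each statement's English description precedes it below -/
import Mathlib

section
/- The n×n Cauchy matrix with (i,j) entry 1/(i+j), for 1 ≤ i,j ≤ n, is positive definite. -/
open MeasureTheory Polynomial

set_option maxHeartbeats 1000000 in
/-- The n×n Cauchy matrix with (i,j) entry `1/(i+j)` (1-based indices) is positive definite. -/
theorem cauchy_matrix_posDef (n : ℕ) :
    (Matrix.of fun i j : Fin n =>
      (1 : ℝ) / (((i : ℕ) + 1 + ((j : ℕ) + 1) : ℕ) : ℝ)).PosDef := by
  rw [Matrix.posDef_iff_dotProduct_mulVec]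
  constructor
  · ext i j
    simp [Matrix.conjTranspose_apply, Matrix.of_apply]
    ring_nf
  · intro x hx
    -- the polynomial R = ∑ x i * X^i
    set P : ℝ[X] := ∑ i : Fin n, C (x i) * X ^ (i : ℕ) with hP
    have hPne : P ≠ 0 := by
      intro h
      apply hx
      funext i
      have := congrArg (fun q => Polynomial.coeff q (i : ℕ)) h
      simp only [hP, Polynomial.finset_sum_coeff, Polynomial.coeff_C_mul,
        Polynomial.coeff_X_pow, Polynomial.coeff_zero] at this
      rw [Finset.sum_eq_single i] at this
      · simpa using this
      · intro b _ hb
        simp [Fin.val_eq_val, Ne.symm hb]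
      · simp
    have heval : ∀ t : ℝ, t * (P.eval t) ^ 2
        = ∑ i : Fin n, ∑ j : Fin n, x i * x j * t ^ ((i : ℕ) + (j : ℕ) + 1) := by
      intro t
      have : P.eval t = ∑ i : Fin n, x i * t ^ (i : ℕ) := by
        simp [hP, Polynomial.eval_finset_sum]
      rw [this, sq, Finset.sum_mul_sum, Finset.mul_sum]
      refine Finset.sum_congr rfl fun i _ => ?_
      rw [Finset.mul_sum]
      refine Finset.sum_congr rfl fun j _ => ?_
      rw [pow_add, pow_add, pow_one]
      ring
    have hii : ∀ (i j : Fin n), IntervalIntegrable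
        (fun t : ℝ => x i * x j * t ^ ((i : ℕ) + (j : ℕ) + 1)) volume 0 1 :=
      fun i j => (Continuous.intervalIntegrable (by continuity) 0 1)
    have hint : ∀ (i j : Fin n), (∫ t in (0:ℝ)..1, x i * x j * t ^ ((i : ℕ) + (j : ℕ) + 1))
        = x i * x j * (1 / (((i : ℕ) + (j : ℕ) + 2 : ℕ) : ℝ)) := by
      intro i j
      rw [intervalIntegral.integral_const_mul, integral_pow]
      push_cast
      rw [one_pow, zero_pow (by omega)]
      ring
    have h1 : (∫ t in (0:ℝ)..1, t * (P.eval t) ^ 2)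
        = ∑ i : Fin n, ∑ j : Fin n, x i * x j * (1 / (((i : ℕ) + (j : ℕ) + 2 : ℕ) : ℝ)) := by
      rw [intervalIntegral.integral_congr (g := fun t =>
        ∑ i : Fin n, ∑ j : Fin n, x i * x j * t ^ ((i : ℕ) + (j : ℕ) + 1))
        (fun t _ => heval t)]
      rw [intervalIntegral.integral_finset_sum
        (f := fun (i : Fin n) (t : ℝ) => ∑ j : Fin n, x i * x j * t ^ ((i : ℕ) + (j : ℕ) + 1))
        (fun i _ => Continuous.intervalIntegrable
          (continuous_finset_sum _ (fun j _ => by continuity)) 0 1)]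
      refine Finset.sum_congr rfl fun i _ => ?_
      rw [intervalIntegral.integral_finset_sum
        (f := fun (j : Fin n) (t : ℝ) => x i * x j * t ^ ((i : ℕ) + (j : ℕ) + 1))
        (fun j _ => hii i j)]
      exact Finset.sum_congr rfl fun j _ => hint i j
    have key : dotProduct (star x)
        ((Matrix.of fun i j : Fin n =>
          (1 : ℝ) / (((i : ℕ) + 1 + ((j : ℕ) + 1) : ℕ) : ℝ)).mulVec x)
        = ∫ t in (0:ℝ)..1, t * (P.eval t) ^ 2 := by
      rw [h1]
      simp only [dotProduct, Matrix.mulVec, Matrix.of_apply, star_trivial]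
      refine Finset.sum_congr rfl fun i _ => ?_
      rw [Finset.mul_sum]
      refine Finset.sum_congr rfl fun j _ => ?_
      push_cast
      ring
    rw [key]
    set f : ℝ → ℝ := fun t => t * (P.eval t) ^ 2 with hf
    have hfc : Continuous f := continuous_id.mul ((P.continuous_aeval).pow 2)
    rw [intervalIntegral.integral_of_le (by norm_num : (0:ℝ) ≤ 1)]
    rw [MeasureTheory.setIntegral_pos_iff_support_of_nonneg_ae]
    · -- support has positive measure
      have hsub : Set.Ioc (0:ℝ) 1 \ {t | (X * P ^ 2 : ℝ[X]).IsRoot t}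
          ⊆ Function.support f ∩ Set.Ioc 0 1 := by
        rintro t ⟨ht, hroot⟩
        refine ⟨?_, ht⟩
        simp only [Set.mem_setOf_eq, Polynomial.IsRoot, Polynomial.eval_mul,
          Polynomial.eval_X, Polynomial.eval_pow] at hroot
        exact hroot
      have hXP : (X * P ^ 2 : ℝ[X]) ≠ 0 := by
        simp [X_ne_zero, pow_eq_zero_iff, hPne]
      have hfin : ({t | (X * P ^ 2 : ℝ[X]).IsRoot t} : Set ℝ).Finite :=
        Polynomial.finite_setOf_isRoot hXP
      have h1 : volume (Set.Ioc (0:ℝ) 1 \ {t | (X * P ^ 2 : ℝ[X]).IsRoot t})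
          = volume (Set.Ioc (0:ℝ) 1) := by
        apply MeasureTheory.measure_diff_null
        exact hfin.measure_zero _
      calc (0:ENNReal) < volume (Set.Ioc (0:ℝ) 1) := by simp
        _ = _ := h1.symm
        _ ≤ volume (Function.support f ∩ Set.Ioc 0 1) := measure_mono hsub
    · filter_upwards [ae_restrict_mem measurableSet_Ioc] with t ht
      exact mul_nonneg (le_of_lt ht.1) (sq_nonneg _)
    · exact hfc.integrableOn_Ioc
end

section
/- Given an n×n Hermitian matrix B = [b_{ij}], let D be the (n−1)×(n−1) matrix with entries d_{ij} = b_{ij} + b_{i+1,j+1} − b_{i,j+1} − b_{i+1,j}. Then B is conditionally positive definite if and only if D is positive semidefinite. -/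
open Matrix
open scoped ComplexOrder

/-- For an `(n+1)×(n+1)` Hermitian matrix `B`, let `D` be the `n×n` matrix with entries
`d i j = b i j + b (i+1) (j+1) - b i (j+1) - b (i+1) j`.  Then `B` is conditionally
positive definite (i.e. `(x | Bx) ≥ 0` for all `x` with `∑ xᵢ = 0`) iff `D` is
positive semidefinite. -/
theorem condPosDef_iff_posSemidef (n : ℕ) (B : Matrix (Fin (n + 1)) (Fin (n + 1)) ℂ)
    (hB : B.IsHermitian) :
    (∀ x : Fin (n + 1) → ℂ, ∑ i, x i = 0 → 0 ≤ star x ⬝ᵥ B.mulVec x) ↔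
      (Matrix.of fun i j : Fin n =>
        B i.castSucc j.castSucc + B i.succ j.succ
          - B i.castSucc j.succ - B i.succ j.castSucc).PosSemidef := by
  set L : Matrix (Fin (n+1)) (Fin n) ℂ :=
    Matrix.of fun i j => (if i = j.castSucc then (1:ℂ) else 0) -
      (if i = j.succ then (1:ℂ) else 0) with hL
  have hD : (Matrix.of fun i j : Fin n =>
        B i.castSucc j.castSucc + B i.succ j.succ
          - B i.castSucc j.succ - B i.succ j.castSucc) = Lᴴ * B * L := by
    ext i j
    simp only [Matrix.mul_apply, hL, conjTranspose_apply, Matrix.of_apply, star_sub,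
      apply_ite (star : ℂ → ℂ), star_one, star_zero, sub_mul, mul_sub, ite_mul, one_mul, zero_mul,
      mul_ite, mul_one, mul_zero, Finset.sum_sub_distrib, Finset.sum_ite_eq, Finset.sum_ite_eq',
      Finset.mem_univ, if_true]
    ring
  have key : ∀ y : Fin n → ℂ, star y ⬝ᵥ (Lᴴ * B * L).mulVec y
      = star (L.mulVec y) ⬝ᵥ B.mulVec (L.mulVec y) := by
    intro y
    rw [star_mulVec, ← mulVec_mulVec, ← mulVec_mulVec, dotProduct_mulVec]
  have hsum : ∀ y : Fin n → ℂ, ∑ i, (L.mulVec y) i = 0 := by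
    intro y
    simp only [mulVec, dotProduct, hL, Matrix.of_apply, sub_mul, ite_mul, one_mul, zero_mul]
    rw [Finset.sum_comm]
    simp [Finset.sum_sub_distrib, Finset.sum_ite_eq, Finset.sum_ite_eq']
  constructor
  · intro h
    rw [hD]
    refine PosSemidef.of_dotProduct_mulVec_nonneg (isHermitian_conjTranspose_mul_mul L hB) fun y => ?_
    rw [key y]
    exact h _ (hsum y)
  · intro hPSD x hx
    set X : ℕ → ℂ := fun k => if h : k < n+1 then x ⟨k, h⟩ else 0 with hX
    set S : ℕ → ℂ := fun k => ∑ i ∈ Finset.range k, X i with hS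
    have hS0 : S 0 = 0 := by simp [hS]
    have hSn : S (n+1) = 0 := by
      have : S (n+1) = ∑ i : Fin (n+1), x i := by
        show ∑ i ∈ Finset.range (n+1), X i = ∑ i : Fin (n+1), x i
        rw [← Fin.sum_univ_eq_sum_range]
        exact Finset.sum_congr rfl fun i _ => by simp [hX, i.isLt, Nat.not_lt.mpr (Nat.lt_succ_iff.mp i.isLt)]
      rw [this, hx]
    set y : Fin n → ℂ := fun j => S ((j:ℕ) + 1) with hy
    have hA : ∀ i : Fin (n+1),
        (∑ j : Fin n, if i = j.castSucc then y j else 0) = S ((i:ℕ)+1) := by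
      intro i
      rcases lt_or_ge (i:ℕ) n with h | h
      · rw [Finset.sum_eq_single (⟨(i:ℕ), h⟩ : Fin n)]
        · rw [if_pos (by ext; simp)]
        · intro j _ hj
          rw [if_neg]
          intro hc
          exact hj (Fin.ext (by simpa using (congrArg Fin.val hc).symm))
        · simp
      · have hi : (i:ℕ) = n := le_antisymm (Nat.lt_succ_iff.mp i.isLt) h
        rw [Finset.sum_eq_zero, hi, hSn]
        intro j _
        rw [if_neg]
        intro hc
        have := congrArg Fin.val hc
        simp [hi] at this
        omega
    have hBsum : ∀ i : Fin (n+1),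
        (∑ j : Fin n, if i = j.succ then y j else 0) = S (i:ℕ) := by
      intro i
      rcases Nat.eq_zero_or_pos (i:ℕ) with h | h
      · rw [Finset.sum_eq_zero, h, hS0]
        intro j _
        rw [if_neg]
        intro hc
        have := congrArg Fin.val hc
        rw [Fin.val_succ] at this
        omega
      · have hlt : (i:ℕ) - 1 < n := by omega
        rw [Finset.sum_eq_single (⟨(i:ℕ) - 1, hlt⟩ : Fin n)]
        · rw [if_pos (by ext; simp; omega)]
          show S ((i:ℕ) - 1 + 1) = S (i:ℕ)
          congr 1
          omega
        · intro j _ hj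
          rw [if_neg]
          intro hc
          apply hj
          apply Fin.ext
          have := congrArg Fin.val hc
          simp at this
          show (j:ℕ) = (i:ℕ) - 1
          omega
        · simp
    have hLy : L.mulVec y = x := by
      funext i
      have hxi : x i = S ((i:ℕ)+1) - S (i:ℕ) := by
        rw [hS]
        simp [Finset.sum_range_succ, hX, i.isLt, Nat.not_lt.mpr (Nat.lt_succ_iff.mp i.isLt)]
      show ∑ j, ((if i = j.castSucc then (1:ℂ) else 0) -
          (if i = j.succ then (1:ℂ) else 0)) * y j = x i
      simp only [sub_mul, ite_mul, one_mul, zero_mul, Finset.sum_sub_distrib]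
      rw [hA i, hBsum i, hxi]
    have := hPSD.dotProduct_mulVec_nonneg y
    rw [hD, key y, hLy] at this
    exact this
end

section
/- Let f be a C¹ function on [0, α) with g(t) = f(t)/t. If g is n-monotone on (0, α) and n-convex on (0, α), then f is n-convex on (0, α). -/
/-- First divided difference, with the derivative on the diagonal. -/
noncomputable def dd1 (f : ℝ → ℝ) (s t : ℝ) : ℝ :=
  if s = t then deriv f s else (f s - f t) / (s - t)

/-- Second divided difference `[r,s,t]_f` (for `r ≠ t`). -/
noncomputable def dd2 (f : ℝ → ℝ) (r s t : ℝ) : ℝ := (dd1 f r s - dd1 f s t) / (r - t)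

/-- `n`-monotonicity in the Loewner sense: all `n×n` Loewner matrices at points of `I`
are positive semidefinite. -/
def LoewnerMonotone (g : ℝ → ℝ) (I : Set ℝ) (n : ℕ) : Prop :=
  ∀ t : Fin n → ℝ, (∀ i, t i ∈ I) →
    (Matrix.of fun i j => dd1 g (t i) (t j)).PosSemidef

/-- `n`-convexity in the Kraus sense: all `n×n` Kraus matrices `([z,tᵢ,tⱼ]_f)` at points
of `I` (with base point `z ∈ I` distinct from the `tᵢ`) are positive semidefinite. -/
def KrausConvex (f : ℝ → ℝ) (I : Set ℝ) (n : ℕ) : Prop :=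
  ∀ (z : ℝ) (t : Fin n → ℝ), z ∈ I → (∀ i, t i ∈ I) → z ∉ Set.range t →
    (Matrix.of fun i j => dd2 f z (t i) (t j)).PosSemidef

/-- A nonnegative real multiple of a PSD real matrix is PSD. -/
lemma posSemidef_smul {m : Type*} [Fintype m] {A : Matrix m m ℝ} (hA : A.PosSemidef)
    {c : ℝ} (hc : 0 ≤ c) : (c • A).PosSemidef := by
  refine ⟨?_, fun x => ?_⟩
  · unfold Matrix.IsHermitian
    rw [Matrix.conjTranspose_smul, hA.1]
    simp
  · exact (hA.smul hc).2 x

section key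

variable {α : ℝ} {f g : ℝ → ℝ}

/-- First divided difference Leibniz identity for `f = t·g`. -/
lemma dd1_eq (hf : ContDiffOn ℝ 1 f (Set.Ico 0 α))
    (hg : ∀ t ∈ Set.Ioo 0 α, g t = f t / t)
    {s t : ℝ} (hs : s ∈ Set.Ioo 0 α) (ht : t ∈ Set.Ioo 0 α) :
    dd1 f s t = s * dd1 g s t + g t := by
  have hfe : ∀ u ∈ Set.Ioo 0 α, f u = u * g u := by
    intro u hu
    have hne := ne_of_gt hu.1
    rw [hg u hu]
    field_simp
  by_cases hst : s = t
  · subst hst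
    -- diagonal case: derivatives
    have hmem : Set.Ico 0 α ∈ nhds s :=
      Filter.mem_of_superset (isOpen_Ioo.mem_nhds hs) Set.Ioo_subset_Ico_self
    have hfd : DifferentiableAt ℝ f s :=
      ((hf.contDiffAt hmem).differentiableAt one_ne_zero)
    have hne : s ≠ 0 := ne_of_gt hs.1
    have hgeq : g =ᶠ[nhds s] fun u => f u / u :=
      Filter.eventuallyEq_of_mem (isOpen_Ioo.mem_nhds hs) (fun u hu => hg u hu)
    have hgd : DifferentiableAt ℝ g s := by
      have : DifferentiableAt ℝ (fun u => f u / u) s :=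
        hfd.div differentiableAt_id hne
      exact this.congr_of_eventuallyEq hgeq
    have hG : HasDerivAt g (deriv g s) s := hgd.hasDerivAt
    have hP : HasDerivAt (fun u => u * g u) (1 * g s + s * deriv g s) s :=
      (hasDerivAt_id s).mul hG
    have hfeq : f =ᶠ[nhds s] fun u => u * g u :=
      Filter.eventuallyEq_of_mem (isOpen_Ioo.mem_nhds hs) (fun u hu => hfe u hu)
    have hF : HasDerivAt f (1 * g s + s * deriv g s) s :=
      hP.congr_of_eventuallyEq hfeq
    simp only [dd1, if_pos rfl, eq_self_iff_true, if_true]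
    rw [hF.deriv]
    ring
  · have hst' : s - t ≠ 0 := sub_ne_zero.mpr hst
    simp only [dd1, if_neg hst]
    rw [hfe s hs, hfe t ht]
    field_simp
    ring

lemma dd1_slope {s t : ℝ} (hst : s ≠ t) : g s - g t = (s - t) * dd1 g s t := by
  simp only [dd1, if_neg hst]
  field_simp [sub_ne_zero.mpr hst]

/-- Second divided difference Leibniz identity for `f = t·g`. -/
lemma dd2_eq (hf : ContDiffOn ℝ 1 f (Set.Ico 0 α))
    (hg : ∀ u ∈ Set.Ioo 0 α, g u = f u / u)
    {z s t : ℝ} (hz : z ∈ Set.Ioo 0 α) (hs : s ∈ Set.Ioo 0 α) (ht : t ∈ Set.Ioo 0 α)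
    (hzs : z ≠ s) (hzt : z ≠ t) :
    dd2 f z s t = z * dd2 g z s t + dd1 g s t := by
  have h1 : dd1 f z s = z * dd1 g z s + g s := dd1_eq hf hg hz hs
  have h2 : dd1 f s t = s * dd1 g s t + g t := dd1_eq hf hg hs ht
  have hzt' : z - t ≠ 0 := sub_ne_zero.mpr hzt
  by_cases hst : s = t
  · subst hst
    simp only [dd2, h1, h2]
    field_simp
    ring
  · have hs' : g s - g t = (s - t) * dd1 g s t := dd1_slope hst
    simp only [dd2, h1, h2]
    have : z * dd1 g z s + g s - (s * dd1 g s t + g t)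
        = z * (dd1 g z s - dd1 g s t) + (z - t) * dd1 g s t := by
      have := hs'
      linarith [hs']
    rw [this]
    field_simp

end key

/-- If `f` is C¹ on `[0,α)`, `g t = f t / t` is `n`-monotone and `n`-convex on `(0,α)`,
then `f` is `n`-convex on `(0,α)`. -/
theorem nConvex_of_nMonotone_nConvex (α : ℝ) (hα : 0 < α) (n : ℕ) (f g : ℝ → ℝ)
    (hf : ContDiffOn ℝ 1 f (Set.Ico 0 α))
    (hg : ∀ t ∈ Set.Ioo 0 α, g t = f t / t)
    (hmono : LoewnerMonotone g (Set.Ioo 0 α) n)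
    (hconv : KrausConvex g (Set.Ioo 0 α) n) :
    KrausConvex f (Set.Ioo 0 α) n := by
  intro z t hz ht hzt
  have hzti : ∀ i, z ≠ t i := by
    intro i h
    exact hzt ⟨i, h.symm⟩
  have hA := hconv z t hz ht hzt
  have hB := hmono t ht
  have key : (Matrix.of fun i j => dd2 f z (t i) (t j))
      = z • (Matrix.of fun i j => dd2 g z (t i) (t j))
        + (Matrix.of fun i j => dd1 g (t i) (t j)) := by
    ext i j
    simp only [Matrix.add_apply, Matrix.smul_apply, Matrix.of_apply, smul_eq_mul]
    exact dd2_eq hf hg hz (ht i) (ht j) (hzti i) (hzti j)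
  rw [key]
  exact (posSemidef_smul hA (le_of_lt hz.1)).add hB
end

section
/- There exists β > 0 and a function g that is 2-monotone on (0, β) such that f(t) = t·g(t) is not 2-convex on [0, β); explicitly, g(t) = 1 + t/2 + t²/3 + t³/4 + t⁴/5 works: det M₂(g; t) = 1/72 + t/15 − (77/120)t² − t³ − (4/5)t⁴ > 0 on (0, 0.17], while det K₂(f; t) = 1/72 + t/12 − (23/24)t² − 2t³ − 2t⁴ < 0 at t = 0.15. -/
/-- The Hansen–Tomiyama matrix `K₂(f;t)`, with entries `f^{(i+j)}(t)/(i+j)!`. -/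
noncomputable def K2 (f : ℝ → ℝ) (t : ℝ) : Matrix (Fin 2) (Fin 2) ℝ :=
  !![iteratedDeriv 2 f t / 2, iteratedDeriv 3 f t / 6;
     iteratedDeriv 3 f t / 6, iteratedDeriv 4 f t / 24]

/-- The Loewner–Dobsch matrix `M₂(g;t)`, with entries `g^{(i+j-1)}(t)/(i+j-1)!`. -/
noncomputable def M2 (g : ℝ → ℝ) (t : ℝ) : Matrix (Fin 2) (Fin 2) ℝ :=
  !![deriv g t, iteratedDeriv 2 g t / 2;
     iteratedDeriv 2 g t / 2, iteratedDeriv 3 g t / 6]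

private lemma deriv_g : deriv (fun s : ℝ => 1 + s / 2 + s ^ 2 / 3 + s ^ 3 / 4 + s ^ 4 / 5)
    = fun s : ℝ => 1 / 2 + 2 * s / 3 + 3 * s ^ 2 / 4 + 4 * s ^ 3 / 5 := by
  funext s
  have h : HasDerivAt (fun s : ℝ => 1 + s / 2 + s ^ 2 / 3 + s ^ 3 / 4 + s ^ 4 / 5)
      ((((0 + 1 / 2) + ((2 : ℕ) * s ^ (2 - 1)) / 3) + ((3 : ℕ) * s ^ (3 - 1)) / 4)
        + ((4 : ℕ) * s ^ (4 - 1)) / 5) s :=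
    ((((hasDerivAt_const s (1 : ℝ)).add ((hasDerivAt_id s).div_const 2)).add
      ((hasDerivAt_pow 2 s).div_const 3)).add ((hasDerivAt_pow 3 s).div_const 4)).add
      ((hasDerivAt_pow 4 s).div_const 5)
  rw [h.deriv]; push_cast; ring

private lemma deriv_g2 : deriv (fun s : ℝ => 1 / 2 + 2 * s / 3 + 3 * s ^ 2 / 4 + 4 * s ^ 3 / 5)
    = fun s : ℝ => 2 / 3 + 3 * s / 2 + 12 * s ^ 2 / 5 := by
  funext s
  have h : HasDerivAt (fun s : ℝ => 1 / 2 + 2 * s / 3 + 3 * s ^ 2 / 4 + 4 * s ^ 3 / 5)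
      (((0 + (2 * 1) / 3) + (3 * ((2 : ℕ) * s ^ (2 - 1))) / 4)
        + (4 * ((3 : ℕ) * s ^ (3 - 1))) / 5) s :=
    (((hasDerivAt_const s ((1 : ℝ) / 2)).add
      (((hasDerivAt_id s).const_mul 2).div_const 3)).add
      (((hasDerivAt_pow 2 s).const_mul 3).div_const 4)).add
      (((hasDerivAt_pow 3 s).const_mul 4).div_const 5)
  rw [h.deriv]; push_cast; ring

private lemma deriv_g3 : deriv (fun s : ℝ => 2 / 3 + 3 * s / 2 + 12 * s ^ 2 / 5)
    = fun s : ℝ => 3 / 2 + 24 * s / 5 := by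
  funext s
  have h : HasDerivAt (fun s : ℝ => 2 / 3 + 3 * s / 2 + 12 * s ^ 2 / 5)
      ((0 + (3 * 1) / 2) + (12 * ((2 : ℕ) * s ^ (2 - 1))) / 5) s :=
    ((hasDerivAt_const s ((2 : ℝ) / 3)).add
      (((hasDerivAt_id s).const_mul 3).div_const 2)).add
      (((hasDerivAt_pow 2 s).const_mul 12).div_const 5)
  rw [h.deriv]; push_cast; ring

private lemma deriv_f : deriv (fun s : ℝ => s * (1 + s / 2 + s ^ 2 / 3 + s ^ 3 / 4 + s ^ 4 / 5))
    = fun s : ℝ => 1 + s + s ^ 2 + s ^ 3 + s ^ 4 := by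
  funext s
  have h : HasDerivAt (fun s : ℝ => s * (1 + s / 2 + s ^ 2 / 3 + s ^ 3 / 4 + s ^ 4 / 5))
      ((((1 + ((2 : ℕ) * s ^ (2 - 1)) / 2) + ((3 : ℕ) * s ^ (3 - 1)) / 3)
        + ((4 : ℕ) * s ^ (4 - 1)) / 4) + ((5 : ℕ) * s ^ (5 - 1)) / 5) s := by
    have heq : (fun s : ℝ => s * (1 + s / 2 + s ^ 2 / 3 + s ^ 3 / 4 + s ^ 4 / 5))
        = fun s : ℝ => s + s ^ 2 / 2 + s ^ 3 / 3 + s ^ 4 / 4 + s ^ 5 / 5 := by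
      funext s; ring
    rw [heq]
    exact ((((hasDerivAt_id s).add ((hasDerivAt_pow 2 s).div_const 2)).add
      ((hasDerivAt_pow 3 s).div_const 3)).add ((hasDerivAt_pow 4 s).div_const 4)).add
      ((hasDerivAt_pow 5 s).div_const 5)
  rw [h.deriv]; push_cast; ring

private lemma deriv_f2 : deriv (fun s : ℝ => 1 + s + s ^ 2 + s ^ 3 + s ^ 4)
    = fun s : ℝ => 1 + 2 * s + 3 * s ^ 2 + 4 * s ^ 3 := by
  funext s
  have h : HasDerivAt (fun s : ℝ => 1 + s + s ^ 2 + s ^ 3 + s ^ 4)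
      ((((0 + 1) + (2 : ℕ) * s ^ (2 - 1)) + (3 : ℕ) * s ^ (3 - 1)) + (4 : ℕ) * s ^ (4 - 1)) s :=
    ((((hasDerivAt_const s (1 : ℝ)).add (hasDerivAt_id s)).add (hasDerivAt_pow 2 s)).add
      (hasDerivAt_pow 3 s)).add (hasDerivAt_pow 4 s)
  rw [h.deriv]; push_cast; ring

private lemma deriv_f3 : deriv (fun s : ℝ => 1 + 2 * s + 3 * s ^ 2 + 4 * s ^ 3)
    = fun s : ℝ => 2 + 6 * s + 12 * s ^ 2 := by
  funext s
  have h : HasDerivAt (fun s : ℝ => 1 + 2 * s + 3 * s ^ 2 + 4 * s ^ 3)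
      (((0 + 2 * 1) + 3 * ((2 : ℕ) * s ^ (2 - 1))) + 4 * ((3 : ℕ) * s ^ (3 - 1))) s :=
    (((hasDerivAt_const s (1 : ℝ)).add ((hasDerivAt_id s).const_mul 2)).add
      ((hasDerivAt_pow 2 s).const_mul 3)).add ((hasDerivAt_pow 3 s).const_mul 4)
  rw [h.deriv]; push_cast; ring

private lemma deriv_f4 : deriv (fun s : ℝ => 2 + 6 * s + 12 * s ^ 2)
    = fun s : ℝ => 6 + 24 * s := by
  funext s
  have h : HasDerivAt (fun s : ℝ => 2 + 6 * s + 12 * s ^ 2)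
      ((0 + 6 * 1) + 12 * ((2 : ℕ) * s ^ (2 - 1))) s :=
    ((hasDerivAt_const s (2 : ℝ)).add ((hasDerivAt_id s).const_mul 6)).add
      ((hasDerivAt_pow 2 s).const_mul 12)
  rw [h.deriv]; push_cast; ring

private lemma M2_eval (t : ℝ) :
    M2 (fun s => 1 + s / 2 + s ^ 2 / 3 + s ^ 3 / 4 + s ^ 4 / 5) t
      = !![1 / 2 + 2 * t / 3 + 3 * t ^ 2 / 4 + 4 * t ^ 3 / 5,
            (2 / 3 + 3 * t / 2 + 12 * t ^ 2 / 5) / 2;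
          (2 / 3 + 3 * t / 2 + 12 * t ^ 2 / 5) / 2,
            (3 / 2 + 24 * t / 5) / 6] := by
  have h2 : iteratedDeriv 2 (fun s : ℝ => 1 + s / 2 + s ^ 2 / 3 + s ^ 3 / 4 + s ^ 4 / 5)
      = fun s : ℝ => 2 / 3 + 3 * s / 2 + 12 * s ^ 2 / 5 := by
    rw [iteratedDeriv_succ, iteratedDeriv_one, deriv_g, deriv_g2]
  have h3 : iteratedDeriv 3 (fun s : ℝ => 1 + s / 2 + s ^ 2 / 3 + s ^ 3 / 4 + s ^ 4 / 5)
      = fun s : ℝ => 3 / 2 + 24 * s / 5 := by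
    rw [iteratedDeriv_succ, h2, deriv_g3]
  rw [M2, deriv_g, h2, h3]

private lemma K2_eval (t : ℝ) :
    K2 (fun s => s * (1 + s / 2 + s ^ 2 / 3 + s ^ 3 / 4 + s ^ 4 / 5)) t
      = !![(1 + 2 * t + 3 * t ^ 2 + 4 * t ^ 3) / 2, (2 + 6 * t + 12 * t ^ 2) / 6;
          (2 + 6 * t + 12 * t ^ 2) / 6, (6 + 24 * t) / 24] := by
  have h2 : iteratedDeriv 2 (fun s : ℝ => s * (1 + s / 2 + s ^ 2 / 3 + s ^ 3 / 4 + s ^ 4 / 5))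
      = fun s : ℝ => 1 + 2 * s + 3 * s ^ 2 + 4 * s ^ 3 := by
    rw [iteratedDeriv_succ, iteratedDeriv_one, deriv_f, deriv_f2]
  have h3 : iteratedDeriv 3 (fun s : ℝ => s * (1 + s / 2 + s ^ 2 / 3 + s ^ 3 / 4 + s ^ 4 / 5))
      = fun s : ℝ => 2 + 6 * s + 12 * s ^ 2 := by
    rw [iteratedDeriv_succ, h2, deriv_f3]
  have h4 : iteratedDeriv 4 (fun s : ℝ => s * (1 + s / 2 + s ^ 2 / 3 + s ^ 3 / 4 + s ^ 4 / 5))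
      = fun s : ℝ => 6 + 24 * s := by
    rw [iteratedDeriv_succ, h3, deriv_f4]
  rw [K2, h2, h3, h4]

private lemma posSemidef_fin_two {a b c : ℝ} (ha : 0 ≤ a) (hdet : b ^ 2 ≤ a * c)
    (hc : 0 ≤ c) : (!![a, b; b, c] : Matrix (Fin 2) (Fin 2) ℝ).PosSemidef := by
  rw [Matrix.posSemidef_iff_dotProduct_mulVec]
  constructor
  · ext i j
    fin_cases i <;> fin_cases j <;>
      simp [Matrix.conjTranspose, Matrix.transpose]
  · intro x
    have hx : dotProduct (star x) ((!![a, b; b, c] : Matrix (Fin 2) (Fin 2) ℝ).mulVec x)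
        = a * x 0 ^ 2 + 2 * b * (x 0 * x 1) + c * x 1 ^ 2 := by
      simp [dotProduct, Matrix.mulVec, Fin.sum_univ_two]
      ring
    rw [hx]
    rcases eq_or_lt_of_le ha with h0 | h0
    · have hb : b = 0 := by nlinarith [sq_nonneg b]
      rw [← h0, hb]
      nlinarith [sq_nonneg (x 1)]
    · nlinarith [sq_nonneg (a * x 0 + b * x 1),
        mul_nonneg (sub_nonneg.mpr hdet) (sq_nonneg (x 1)), h0]

/-- There is `β > 0` such that `g t = 1 + t/2 + t²/3 + t³/4 + t⁴/5` is 2-monotone on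
`(0,β)` (its `M₂` matrices are positive semidefinite there) while `f t = t·g t` is not
2-convex on `[0,β)` (some `K₂(f;t)` fails to be positive semidefinite). -/
theorem exists_two_monotone_not_product_two_convex :
    ∃ β > (0 : ℝ),
      (∀ t ∈ Set.Ioo (0 : ℝ) β,
        (M2 (fun s => 1 + s / 2 + s ^ 2 / 3 + s ^ 3 / 4 + s ^ 4 / 5) t).PosSemidef) ∧
      ¬ (∀ t ∈ Set.Ico (0 : ℝ) β,
        (K2 (fun s => s * (1 + s / 2 + s ^ 2 / 3 + s ^ 3 / 4 + s ^ 4 / 5)) t).PosSemidef) := by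
  refine ⟨4 / 25, by norm_num, ?_, ?_⟩
  · rintro t ⟨ht0, ht1⟩
    rw [M2_eval]
    apply posSemidef_fin_two
    · nlinarith
    · nlinarith [sq_nonneg t, mul_nonneg ht0.le ht0.le,
        mul_nonneg (mul_nonneg ht0.le ht0.le) ht0.le,
        mul_pos ht0 (sub_pos.mpr ht1), sq_nonneg (t * (4 / 25 - t)),
        mul_nonneg (mul_nonneg ht0.le ht0.le) (sub_pos.mpr ht1).le]
    · nlinarith
  · intro h
    have ht : (3 / 20 : ℝ) ∈ Set.Ico (0 : ℝ) (4 / 25) := by constructor <;> norm_num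
    have hpsd := (h (3 / 20) ht).dotProduct_mulVec_nonneg ![(317 : ℝ) / 600, -(1381 / 2000)]
    rw [K2_eval] at hpsd
    simp [dotProduct, Matrix.mulVec, Fin.sum_univ_two] at hpsd
    norm_num at hpsd
end

section
/- If f is a C⁴ function on (a, b) that is 2-convex, then f' ∈ Q₂(a, b), i.e., f'' (the derivative of f') is convex on (a, b). -/
lemma iteratedDerivWithin_eqOn_of_isOpen' {f : ℝ → ℝ} {s : Set ℝ} (hs : IsOpen s) (n : ℕ)
    {x : ℝ} (hx : x ∈ s) : iteratedDerivWithin n f s x = iteratedDeriv n f x := by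
  simp only [iteratedDerivWithin, iteratedDeriv, iteratedFDerivWithin_of_isOpen n hs hx]

/-- If `f` is C⁴ on `(a,b)` and its Hansen–Tomiyama matrices
`K₂(f;t) = [[f''/2, f'''/6],[f'''/6, f''''/24]]` are positive semidefinite on `(a,b)`
(i.e. `f` is 2-convex), then `f'' = (f')'` is convex on `(a,b)`, i.e. `f' ∈ Q₂(a,b)`. -/
theorem deriv_mem_Q2_of_two_convex (a b : ℝ) (f : ℝ → ℝ)
    (hf : ContDiffOn ℝ 4 f (Set.Ioo a b))
    (hconv : ∀ t ∈ Set.Ioo a b,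
      (!![iteratedDeriv 2 f t / 2, iteratedDeriv 3 f t / 6;
          iteratedDeriv 3 f t / 6, iteratedDeriv 4 f t / 24]).PosSemidef) :
    ConvexOn ℝ (Set.Ioo a b) (iteratedDeriv 2 f) := by
  have hO : IsOpen (Set.Ioo a b) := isOpen_Ioo
  have hU : UniqueDiffOn ℝ (Set.Ioo a b) := hO.uniqueDiffOn
  have hd : ∀ m : ℕ, (m : WithTop ℕ∞) < 4 →
      DifferentiableOn ℝ (iteratedDeriv m f) (Set.Ioo a b) := by
    intro m hm
    have := hf.differentiableOn_iteratedDerivWithin hm hU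
    exact fun x hx => ((this x hx).congr
      (fun y hy => (iteratedDerivWithin_eqOn_of_isOpen' hO m hy).symm)
      (iteratedDerivWithin_eqOn_of_isOpen' hO m hx).symm)
  have h2 : DifferentiableOn ℝ (iteratedDeriv 2 f) (Set.Ioo a b) := hd 2 (by norm_num)
  have h3 : DifferentiableOn ℝ (iteratedDeriv 3 f) (Set.Ioo a b) := hd 3 (by norm_num)
  have hderiv : deriv (iteratedDeriv 2 f) = iteratedDeriv 3 f := (iteratedDeriv_succ).symm
  have h4nonneg : ∀ x ∈ Set.Ioo a b, 0 ≤ iteratedDeriv 4 f x := by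
    intro x hx
    have := (hconv x hx).dotProduct_mulVec_nonneg ![0, 1]
    simp [Matrix.mulVec, dotProduct, Fin.sum_univ_two] at this
    linarith
  refine convexOn_of_deriv2_nonneg (convex_Ioo a b) h2.continuousOn ?_ ?_ ?_
  · rwa [interior_Ioo]
  · rw [interior_Ioo, hderiv]; exact h3
  · intro x hx
    rw [interior_Ioo] at hx
    have : deriv^[2] (iteratedDeriv 2 f) x = iteratedDeriv 4 f x := by
      rw [Function.iterate_succ, Function.iterate_one, Function.comp_apply]
      rw [hderiv, ← iteratedDeriv_succ]
    rw [this]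
    exact h4nonneg x hx
end

section
/- If f is a C⁵ function on an interval and f' is 2-monotone there (i.e., M₂(f'; t) is positive semidefinite for all t), then f is 2-convex (i.e., K₂(f; t) is positive semidefinite for all t), because K₂(f; t) equals the Hadamard product of the positive definite Cauchy matrix (1/(i+j))_{1≤i,j≤2} with M₂(f'; t). -/
/-- If `f` is C⁵ on `(a,b)` and `f'` is 2-monotone there, i.e. the Loewner–Dobsch
matrices `M₂(f';t) = [[f'', f'''/2],[f'''/2, f''''/6]]` are positive semidefinite, then
`f` is 2-convex: the Hansen–Tomiyama matrices
`K₂(f;t) = [[f''/2, f'''/6],[f'''/6, f''''/24]]` are positive semidefinite.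
(Indeed `K₂(f;t)` is the Hadamard product of the Cauchy matrix `(1/(i+j))` with
`M₂(f';t)`.) -/
theorem two_convex_of_deriv_two_monotone (a b : ℝ) (f : ℝ → ℝ)
    (hf : ContDiffOn ℝ 5 f (Set.Ioo a b))
    (hmono : ∀ t ∈ Set.Ioo a b,
      (!![iteratedDeriv 2 f t, iteratedDeriv 3 f t / 2;
          iteratedDeriv 3 f t / 2, iteratedDeriv 4 f t / 6]).PosSemidef) :
    ∀ t ∈ Set.Ioo a b,
      (!![iteratedDeriv 2 f t / 2, iteratedDeriv 3 f t / 6;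
          iteratedDeriv 3 f t / 6, iteratedDeriv 4 f t / 24]).PosSemidef := by
  intro t ht
  obtain ⟨hherm, hquad⟩ := Matrix.posSemidef_iff_dotProduct_mulVec.mp (hmono t ht)
  set c := iteratedDeriv 2 f t
  set d := iteratedDeriv 3 f t
  set e := iteratedDeriv 4 f t
  rw [Matrix.posSemidef_iff_dotProduct_mulVec]
  constructor
  · ext i j
    fin_cases i <;> fin_cases j <;>
      simp [Matrix.conjTranspose, Matrix.transpose, Matrix.vecHead, Matrix.vecTail]
  · intro x
    have h1 := hquad ![x 0, (2/3) * x 1]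
    have h2 := hquad ![0, 1]
    simp [Matrix.mulVec, dotProduct, Fin.sum_univ_two] at h1 h2 ⊢
    nlinarith [h1, h2, sq_nonneg (x 1)]
end
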